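/- For ℓ ≤ s, the normalized Bernoulli polynomial B*_ℓ = B_ℓ/ℓ! represents the boundary functional: for all f ∈ H^s, ⟨f, B*_ℓ⟩_s = f^{(ℓ−1)}(1) − f^{(ℓ−1)}(0). Moreover ‖B*_ℓ‖_{H^s} = 1 and ⟨B*_ℓ, B*_m⟩_s = 0 for distinct ℓ, m ∈ {0,1,…,s}. -/

import Mathlib

open MeasureTheory Real Complex

noncomputable section

/-- The oscillatory integral `I_k(f) = ∫₀¹ f(x) e^{-2πikx} dx`. -/
def Ik (k : ℤ) (f : ℝ → ℂ) : ℂ :=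
  ∫ x in (0:ℝ)..1, f x * Complex.exp (-(2 * Real.pi * Complex.I * (k : ℂ) * (x : ℂ)))

/-- The normalized Bernoulli polynomial `B*_ℓ = B_ℓ/ℓ!` as a function `ℝ → ℂ`. -/
def Bstar (ℓ : ℕ) (x : ℝ) : ℂ :=
  ((Polynomial.bernoulli ℓ).map (algebraMap ℚ ℂ)).eval (x : ℂ) / (Nat.factorial ℓ)

/-- The `Hˢ` inner product
`⟨f,g⟩_s = ∑_{ℓ<s} (∫₀¹ f⁽ℓ⁾)·conj(∫₀¹ g⁽ℓ⁾) + ∫₀¹ f⁽ˢ⁾ conj(g⁽ˢ⁾)`. -/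
def hsInner (s : ℕ) (f g : ℝ → ℂ) : ℂ :=
  (∑ ℓ ∈ Finset.range s,
    (∫ x in (0:ℝ)..1, iteratedDeriv ℓ f x) *
      (starRingEnd ℂ) (∫ x in (0:ℝ)..1, iteratedDeriv ℓ g x)) +
  ∫ x in (0:ℝ)..1, iteratedDeriv s f x * (starRingEnd ℂ) (iteratedDeriv s g x)

/-- The squared `Hˢ` norm. -/
def hsNormSq (s : ℕ) (f : ℝ → ℂ) : ℝ :=
  (∑ ℓ ∈ Finset.range s, ‖∫ x in (0:ℝ)..1, iteratedDeriv ℓ f x‖^2) +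
  ∫ x in (0:ℝ)..1, ‖iteratedDeriv s f x‖^2

lemma Bstar_eq (ℓ : ℕ) (x : ℝ) : Bstar ℓ x = (bernoulliFun ℓ x : ℂ) / (Nat.factorial ℓ) := by
  rw [Bstar, bernoulliFun, IsScalarTower.algebraMap_eq ℚ ℝ ℂ, ← Polynomial.map_map,
    Polynomial.eval_map]
  rw [show ((x : ℂ)) = algebraMap ℝ ℂ x from rfl, Polynomial.eval₂_at_apply (algebraMap ℝ ℂ) x]
  norm_num

lemma Bstar_zero : Bstar 0 = fun _ => (1 : ℂ) := by
  funext x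
  simp [Bstar_eq, bernoulliFun, Polynomial.bernoulli_zero]

lemma continuous_Bstar (ℓ : ℕ) : Continuous (Bstar ℓ) := by
  simp only [funext (Bstar_eq ℓ)]
  exact (Complex.continuous_ofReal.comp (Polynomial.continuous _)).div_const _

lemma hasDerivAt_Bstar (ℓ : ℕ) (x : ℝ) : HasDerivAt (Bstar (ℓ + 1)) (Bstar ℓ x) x := by
  simp only [funext (Bstar_eq (ℓ + 1))]
  have h := ((hasDerivAt_bernoulliFun (ℓ + 1) x).ofReal_comp).div_const
    ((Nat.factorial (ℓ + 1) : ℂ))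
  refine h.congr_deriv ?_; symm
  rw [Bstar_eq]
  have h1 : (Nat.factorial (ℓ + 1) : ℂ) ≠ 0 := by exact_mod_cast (Nat.factorial_pos _).ne'
  have h2 : (Nat.factorial ℓ : ℂ) ≠ 0 := by exact_mod_cast (Nat.factorial_pos _).ne'
  rw [Nat.add_sub_cancel, Nat.factorial_succ]
  push_cast
  rw [mul_div_mul_left _ _ (by exact_mod_cast Nat.succ_ne_zero ℓ : ((ℓ : ℂ) + 1) ≠ 0)]

lemma deriv_Bstar (ℓ : ℕ) : deriv (Bstar (ℓ + 1)) = Bstar ℓ :=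
  funext fun x => (hasDerivAt_Bstar ℓ x).deriv

lemma iteratedDeriv_Bstar (j ℓ : ℕ) :
    iteratedDeriv j (Bstar ℓ) = if j ≤ ℓ then Bstar (ℓ - j) else 0 := by
  induction j generalizing ℓ with
  | zero => simp
  | succ j ih =>
    rw [iteratedDeriv_succ']
    match ℓ with
    | 0 =>
      have : deriv (Bstar 0) = 0 := by
        rw [Bstar_zero]; funext x; simp
      rw [this]
      simp only [Nat.not_succ_le_zero, if_neg (by omega : ¬ j + 1 ≤ 0)]
      clear ih this
      induction j with
      | zero => simp
      | succ j ih' => rw [iteratedDeriv_succ', show deriv (0 : ℝ → ℂ) = 0 from funext fun x => deriv_const x 0, ih']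
    | (m + 1) =>
      rw [deriv_Bstar, ih]
      by_cases h : j ≤ m
      · rw [if_pos h, if_pos (by omega : j + 1 ≤ m + 1), Nat.succ_sub_succ]
      · rw [if_neg h, if_neg (by omega)]

lemma integral_Bstar (ℓ : ℕ) :
    (∫ x in (0:ℝ)..1, Bstar ℓ x) = if ℓ = 0 then 1 else 0 := by
  match ℓ with
  | 0 => rw [Bstar_zero]; simp
  | (m + 1) =>
    rw [if_neg (Nat.succ_ne_zero m)]
    simp only [Bstar_eq]
    rw [intervalIntegral.integral_div, intervalIntegral.integral_ofReal,
      integral_bernoulliFun_eq_zero (Nat.succ_ne_zero m)]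
    simp

lemma integral_iteratedDeriv_Bstar (j ℓ : ℕ) :
    (∫ x in (0:ℝ)..1, iteratedDeriv j (Bstar ℓ) x) = if j = ℓ then 1 else 0 := by
  rw [iteratedDeriv_Bstar]
  by_cases h : j ≤ ℓ
  · rw [if_pos h, integral_Bstar]
    by_cases h2 : j = ℓ
    · rw [if_pos h2, if_pos (by omega)]
    · rw [if_neg h2, if_neg (by omega)]
  · rw [if_neg h, if_neg (by omega)]
    simp

lemma ftc_lemma {s m : ℕ} (hm : m < s) (f : ℝ → ℂ) (hf : ContDiff ℝ s f) :
    (∫ x in (0:ℝ)..1, iteratedDeriv (m + 1) f x) = iteratedDeriv m f 1 - iteratedDeriv m f 0 := by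
  rw [iteratedDeriv_succ]
  apply intervalIntegral.integral_deriv_eq_sub
  · intro x _
    exact (hf.differentiable_iteratedDeriv m (by exact_mod_cast hm)).differentiableAt
  · rw [← iteratedDeriv_succ]
    exact (hf.continuous_iteratedDeriv (m + 1) (by exact_mod_cast hm)).intervalIntegrable _ _

lemma iteratedDeriv_s_Bstar {ℓ s : ℕ} (h : ℓ ≤ s) :
    iteratedDeriv s (Bstar ℓ) = if ℓ = s then (fun _ : ℝ => (1:ℂ)) else (0 : ℝ → ℂ) := by
  rw [iteratedDeriv_Bstar]
  by_cases he : ℓ = s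
  · subst he; rw [if_pos le_rfl, Nat.sub_self, Bstar_zero, if_pos rfl]
  · rw [if_neg (by omega), if_neg he]

lemma part1 (s : ℕ) (hs : 1 ≤ s) (ℓ : ℕ) (h1 : 1 ≤ ℓ) (h2 : ℓ ≤ s) (f : ℝ → ℂ)
    (hf : ContDiff ℝ s f) :
    hsInner s f (Bstar ℓ) = iteratedDeriv (ℓ-1) f 1 - iteratedDeriv (ℓ-1) f 0 := by
  obtain ⟨m, rfl⟩ : ∃ m, ℓ = m + 1 := ⟨ℓ - 1, by omega⟩
  rw [hsInner]
  have hsum : (∑ j ∈ Finset.range s, (∫ x in (0:ℝ)..1, iteratedDeriv j f x) *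
      (starRingEnd ℂ) (∫ x in (0:ℝ)..1, iteratedDeriv j (Bstar (m+1)) x))
      = if m + 1 ∈ Finset.range s then (∫ x in (0:ℝ)..1, iteratedDeriv (m+1) f x) else 0 := by
    rw [← Finset.sum_ite_eq' (Finset.range s) (m+1)
      (fun j => ∫ x in (0:ℝ)..1, iteratedDeriv j f x)]
    apply Finset.sum_congr rfl
    intro j _
    rw [integral_iteratedDeriv_Bstar]
    by_cases h : j = m + 1 <;> simp [h]
  rw [hsum, iteratedDeriv_s_Bstar h2, Nat.add_sub_cancel]
  rcases eq_or_lt_of_le h2 with heq | hlt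
  · rw [if_neg (by simp [heq]), if_pos heq]
    have : (∫ x in (0:ℝ)..1, iteratedDeriv s f x * (starRingEnd ℂ) ((fun _ : ℝ => (1:ℂ)) x))
        = ∫ x in (0:ℝ)..1, iteratedDeriv s f x := by
      simp
    rw [this, ← heq, ftc_lemma (by omega) f hf, zero_add]
  · rw [if_pos (Finset.mem_range.mpr hlt), if_neg (by omega)]
    have : (∫ x in (0:ℝ)..1, iteratedDeriv s f x * (starRingEnd ℂ) ((0 : ℝ → ℂ) x)) = 0 := by
      simp
    rw [this, ftc_lemma (by omega) f hf, add_zero]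

lemma part23 (s : ℕ) (ℓ m : ℕ) (hℓ : ℓ ≤ s) (hm : m ≤ s) :
    hsInner s (Bstar ℓ) (Bstar m) = if ℓ = m then 1 else 0 := by
  rw [hsInner]
  have hsum : (∑ j ∈ Finset.range s, (∫ x in (0:ℝ)..1, iteratedDeriv j (Bstar ℓ) x) *
      (starRingEnd ℂ) (∫ x in (0:ℝ)..1, iteratedDeriv j (Bstar m) x))
      = if ℓ = m ∧ ℓ < s then 1 else 0 := by
    by_cases he : ℓ = m
    · subst he
      simp only [true_and]
      rw [show (if ℓ < s then (1:ℂ) else 0) = if ℓ ∈ Finset.range s then (1:ℂ) else 0 by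
        simp [Finset.mem_range], ← Finset.sum_ite_eq' (Finset.range s) ℓ (fun _ => (1:ℂ))]
      apply Finset.sum_congr rfl
      intro j _
      rw [integral_iteratedDeriv_Bstar]
      by_cases h : j = ℓ <;> simp [h]
    · rw [if_neg (by tauto)]
      apply Finset.sum_eq_zero
      intro j _
      rw [integral_iteratedDeriv_Bstar, integral_iteratedDeriv_Bstar]
      by_cases h : j = ℓ
      · subst h; simp [he]
      · simp [h]
  rw [hsum, iteratedDeriv_s_Bstar hℓ, iteratedDeriv_s_Bstar hm]
  by_cases heℓ : ℓ = s
  · rw [if_pos heℓ]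
    by_cases hem : m = s
    · rw [if_pos hem, if_neg (by omega), if_pos (show ℓ = m by omega)]
      simp
    · rw [if_neg hem, if_neg (by omega : ¬(ℓ = m ∧ ℓ < s)), if_neg (show ¬ℓ = m by omega)]
      simp
  · rw [if_neg heℓ]
    by_cases hem : m = s
    · rw [if_pos hem, if_neg (by omega : ¬(ℓ = m ∧ ℓ < s)), if_neg (show ¬ℓ = m by omega)]
      simp
    · rw [if_neg hem]
      by_cases he : ℓ = m
      · rw [if_pos (by omega : ℓ = m ∧ ℓ < s), if_pos he]
        simp
      · rw [if_neg (by tauto), if_neg he]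
        simp

/-- The normalized Bernoulli polynomial `B*_ℓ` represents the boundary functional
`f ↦ f⁽ℓ⁻¹⁾(1) - f⁽ℓ⁻¹⁾(0)` in `Hˢ`; moreover `‖B*_ℓ‖_{Hˢ} = 1` for `ℓ ≤ s`, and
`B*_ℓ ⟂ B*_m` for distinct `ℓ, m ∈ {0,…,s}`. -/
theorem stmt_13 (s : ℕ) (hs : 1 ≤ s) :
    (∀ ℓ : ℕ, 1 ≤ ℓ → ℓ ≤ s → ∀ f : ℝ → ℂ, ContDiff ℝ s f →
      hsInner s f (Bstar ℓ) = iteratedDeriv (ℓ-1) f 1 - iteratedDeriv (ℓ-1) f 0) ∧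
    (∀ ℓ : ℕ, ℓ ≤ s → hsInner s (Bstar ℓ) (Bstar ℓ) = 1) ∧
    (∀ ℓ m : ℕ, ℓ ≤ s → m ≤ s → ℓ ≠ m → hsInner s (Bstar ℓ) (Bstar m) = 0) := by
  refine ⟨fun ℓ h1 h2 f hf => part1 s hs ℓ h1 h2 f hf,
    fun ℓ h => by rw [part23 s ℓ ℓ h h, if_pos rfl],
    fun ℓ m hℓ hm hne => by rw [part23 s ℓ m hℓ hm, if_neg hne]⟩
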